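/- Let C > 1, k ∈ [1, min(2(C-1), 2)], 0 < α < 1/C, w₁(p) = (1 + k/2)p - (k/2)p². For p₁ ∈ [0,1], p₂₁, p₂₂ ∈ [0,1] with p = p₁p₂₁ + (1-p₁)p₂₂, define c₂ = C(p₁w₁(p₂₁) + (1-p₁)w₁(p₂₂)) and c₁₂ = (1 - αC)w₁(p) + αc₂. Then c₁₂ ≤ c₂, with strict inequality unless p₂₁ = p₂₂ ∈ {0, 1} or related degenerate cases; in particular c₁₂ ≤ c₂ always holds. -/
import Mathlib


set_option maxHeartbeats 1000000 in
theorem submit_twice_cheaper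
    (C k α : ℝ) (hC : 1 < C)
    (hk : k ∈ Set.Icc (1 : ℝ) (min (2 * (C - 1)) 2))
    (hα1 : 0 < α) (hα2 : α < 1 / C)
    (w₁ : ℝ → ℝ) (hw : w₁ = fun p => (1 + k / 2) * p - k / 2 * p ^ 2)
    (p₁ p₂₁ p₂₂ : ℝ)
    (hp₁ : p₁ ∈ Set.Icc (0 : ℝ) 1) (hp₂₁ : p₂₁ ∈ Set.Icc (0 : ℝ) 1)
    (hp₂₂ : p₂₂ ∈ Set.Icc (0 : ℝ) 1)
    (p : ℝ) (hp : p = p₁ * p₂₁ + (1 - p₁) * p₂₂)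
    (c₂ c₁₂ : ℝ)
    (hc₂ : c₂ = C * (p₁ * w₁ p₂₁ + (1 - p₁) * w₁ p₂₂))
    (hc₁₂ : c₁₂ = (1 - α * C) * w₁ p + α * c₂) :
    c₁₂ ≤ c₂ := by
  obtain ⟨hk1, hk2⟩ := hk
  have hk2' : k ≤ 2 * (C - 1) := le_trans hk2 (min_le_left _ _)
  obtain ⟨ht0, ht1⟩ := hp₁
  obtain ⟨ha0, ha1⟩ := hp₂₁
  obtain ⟨hb0, hb1⟩ := hp₂₂
  subst hw hp hc₂ hc₁₂
  simp only
  set E := p₁ * ((1 + k / 2) * p₂₁ - k / 2 * p₂₁ ^ 2)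
    + (1 - p₁) * ((1 + k / 2) * p₂₂ - k / 2 * p₂₂ ^ 2) with hE
  set q := p₁ * p₂₁ + (1 - p₁) * p₂₂ with hq
  clear_value E q
  have hq0 : 0 ≤ q := by
    rw [hq]
    nlinarith [mul_nonneg ht0 ha0, mul_nonneg (by linarith : (0:ℝ) ≤ 1 - p₁) hb0]
  have hEq : q ≤ E := by
    rw [hE, hq]
    nlinarith [mul_nonneg ht0 (mul_nonneg (mul_nonneg ha0 (by linarith : (0:ℝ) ≤ 1 - p₂₁)) (by linarith : (0:ℝ) ≤ k)),
      mul_nonneg (by linarith : (0:ℝ) ≤ 1 - p₁) (mul_nonneg (mul_nonneg hb0 (by linarith : (0:ℝ) ≤ 1 - p₂₂)) (by linarith : (0:ℝ) ≤ k))]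
  have hid : (1 + k / 2) * q - k / 2 * q ^ 2
      = E + k / 2 * (p₁ * (1 - p₁) * (p₂₁ - p₂₂) ^ 2) := by
    rw [hE, hq]; ring
  have hdq : p₁ * (1 - p₁) * (p₂₁ - p₂₂) ^ 2 ≤ q := by
    rw [hq]
    nlinarith [mul_nonneg ht0 (by linarith : (0:ℝ) ≤ 1 - p₁),
      mul_nonneg ha0 (by linarith : (0:ℝ) ≤ 1 - p₂₁),
      mul_nonneg hb0 (by linarith : (0:ℝ) ≤ 1 - p₂₂),
      mul_nonneg (mul_nonneg ht0 (by linarith : (0:ℝ) ≤ 1 - p₁)) (sq_nonneg (p₂₁ - p₂₂)),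
      mul_nonneg (mul_nonneg ht0 ht0) ha0,
      mul_nonneg (mul_nonneg (by linarith : (0:ℝ) ≤ 1 - p₁) (by linarith : (0:ℝ) ≤ 1 - p₁)) hb0,
      mul_nonneg ht0 (mul_nonneg ha0 (by linarith : (0:ℝ) ≤ 1 - p₂₁)),
      mul_nonneg (by linarith : (0:ℝ) ≤ 1 - p₁) (mul_nonneg hb0 (by linarith : (0:ℝ) ≤ 1 - p₂₂))]
  have hd0 : 0 ≤ p₁ * (1 - p₁) * (p₂₁ - p₂₂) ^ 2 := by
    have := mul_nonneg (mul_nonneg ht0 (by linarith : (0:ℝ) ≤ 1 - p₁)) (sq_nonneg (p₂₁ - p₂₂))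
    linarith
  have hE0 : 0 ≤ E := le_trans hq0 hEq
  have hwle : (1 + k / 2) * q - k / 2 * q ^ 2 ≤ C * E := by
    rw [hid]
    have h1 := mul_le_mul_of_nonneg_right (by linarith : k / 2 ≤ C - 1) hd0
    have h2 := mul_le_mul_of_nonneg_left (hdq.trans hEq) (by linarith : (0:ℝ) ≤ C - 1)
    nlinarith
  have hαC : α * C < 1 := (lt_div_iff₀ (by linarith : (0:ℝ) < C)).mp hα2
  have h1 := mul_le_mul_of_nonneg_left hwle (by linarith : (0:ℝ) ≤ 1 - α * C)
  have h2 : 0 ≤ α * ((C - 1) * (C * E)) :=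
    mul_nonneg hα1.le (mul_nonneg (by linarith) (mul_nonneg (by linarith) hE0))
  have h3 : (1 - α * C) * (C * E) + α * (C * E) = C * E - α * ((C - 1) * (C * E)) := by ring
  linarith
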